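/- Increment compatibility of the fermionic pairing operator: for any Q ⊆ [n], integer ℓ ≥ 1, and word v ∈ ℕ^n with ℓ < min of the nonzero entries of v, one has (Q^{(ℓ)}(v))^{(+1)} = Q^{(ℓ+1)}(v^{(+1)}), where w^{(+1)} increments every nonzero entry of w by 1. -/

import Mathlib

/-- Linear bracket-matching pass.  Tokens are `(site, isOpen)`.  The second argument is the
stack of currently unmatched open brackets (most recent first), the third accumulates the
linearly unmatched closed brackets (most recent first). -/
def pairProcess {α : Type} : List (α × Bool) → List α → List α → List α × List α
  | [], opens, closes => (opens, closes)
  | (a, true) :: ts, opens, closes => pairProcess ts (a :: opens) closes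
  | (a, false) :: ts, [], closes => pairProcess ts [] (a :: closes)
  | (_, false) :: ts, _ :: opens, closes => pairProcess ts opens closes

/-- The token list of `Par(A,B)`: scanning sites `j = 1, …, n` in order, record an open
bracket for `j ∈ B` (the row above) and then a closed bracket for `j ∈ A` (the row below). -/
def parTokens {n : ℕ} (A B : Finset (Fin n)) : List (Fin n × Bool) :=
  (List.finRange n).flatMap
    (fun j => (if j ∈ B then [(j, true)] else []) ++ (if j ∈ A then [(j, false)] else []))

/-- Result of the linear pass on `Par(A,B)`. -/
def parRes {n : ℕ} (A B : Finset (Fin n)) : List (Fin n) × List (Fin n) :=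
  pairProcess (parTokens A B) [] []

/-- The set of cylindrically unpaired particles of `B` (open brackets) in `Par(A,B)`:
after the linear pass, the cyclic rule additionally matches `min` many remaining opens
and closes, leaving the earliest surplus opens unmatched. -/
def unmatchedOpen {n : ℕ} (A B : Finset (Fin n)) : Finset (Fin n) :=
  ((parRes A B).1.drop (parRes A B).2.length).toFinset

/-- The set of cylindrically unpaired particles of `A` (closed brackets) in `Par(A,B)`. -/
def unmatchedClose {n : ℕ} (A B : Finset (Fin n)) : Finset (Fin n) :=
  ((parRes A B).2.take ((parRes A B).2.length - (parRes A B).1.length)).toFinset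

/-- The row-swapping involution on a pair of rows `(A, B)` (`A` below, `B` above):
all cylindrically unmatched entries of `Par(A,B)` are exchanged between the two rows. -/
def sigmaPair {n : ℕ} (A B : Finset (Fin n)) : Finset (Fin n) × Finset (Fin n) :=
  ((A \ unmatchedClose A B) ∪ unmatchedOpen A B,
   (B \ unmatchedOpen A B) ∪ unmatchedClose A B)

/-- The involution `σ_i` acting on rows `i` and `i+1` of a multiline queue. -/
def sigmaRow {n : ℕ} (i : ℕ) (Q : ℕ → Finset (Fin n)) : ℕ → Finset (Fin n) :=
  fun j =>
    if j = i then (sigmaPair (Q i) (Q (i + 1))).1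
    else if j = i + 1 then (sigmaPair (Q i) (Q (i + 1))).2
    else Q j

/-- `u^{(r)}`: the set of sites carrying a particle with label at least `r`. -/
def levelSet {n : ℕ} (u : Fin n → ℕ) (r : ℕ) : Finset (Fin n) :=
  Finset.univ.filter (fun j => r ≤ u j)

/-- Particles of the queue `Q` that are matched (paired) in `Par(Q, B)`. -/
def matchedQ {n : ℕ} (Q B : Finset (Fin n)) : Finset (Fin n) :=
  Q \ unmatchedClose Q B

/-- The set of sites whose output label under `Q^{(ℓ)}(u)` is at least `r`
(cf. Remark 3.2): for `r ≤ ℓ` it is all of `Q` together with the particles of `u^{(r+1)}`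
that collapse, and for `r > ℓ` it is the particles of `Q` matched in `Par(Q, u^{(r)})`
together with the particles of `u^{(r+1)}` that collapse. -/
def labelLevel {n : ℕ} (ℓ : ℕ) (Q : Finset (Fin n)) (u : Fin n → ℕ) (r : ℕ) :
    Finset (Fin n) :=
  (if r ≤ ℓ then Q else matchedQ Q (levelSet u r)) ∪ unmatchedOpen Q (levelSet u (r + 1))

/-- The fermionic pairing operator `Q^{(ℓ)} : 𝒲 → 𝒲`: the output word, whose value at a
site is the label assigned there (the sum of the nested indicator vectors of the label
level sets). -/
def Qop {n : ℕ} (ℓ : ℕ) (Q : Finset (Fin n)) (u : Fin n → ℕ) : Fin n → ℕ :=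
  fun j => ∑ r ∈ Finset.Icc 1 (ℓ + 1 + ∑ j', u j'), if j ∈ labelLevel ℓ Q u r then 1 else 0

/-- `u^{(+1)}`: increment every nonzero entry by one. -/
def incWord {n : ℕ} (u : Fin n → ℕ) : Fin n → ℕ :=
  fun j => if u j = 0 then 0 else u j + 1

namespace PPaux
variable {α : Type}

lemma pp_open (a : α) (ts : List (α×Bool)) (o c : List α) :
    pairProcess ((a,true)::ts) o c = pairProcess ts (a::o) c := rfl
lemma pp_close_nil (a : α) (ts : List (α×Bool)) (c : List α) :
    pairProcess ((a,false)::ts) [] c = pairProcess ts [] (a::c) := rfl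
lemma pp_close_cons (a x : α) (ts : List (α×Bool)) (o c : List α) :
    pairProcess ((a,false)::ts) (x::o) c = pairProcess ts o c := rfl

lemma pp_run (ts : List (α×Bool)) (o c : List α) :
    pairProcess ts o c =
      ((pairProcess ts [] []).1 ++ o.drop (pairProcess ts [] []).2.length,
       (pairProcess ts [] []).2.take ((pairProcess ts [] []).2.length - o.length) ++ c) := by
  induction ts generalizing o c with
  | nil => simp [pairProcess]
  | cons t ts ih =>
    obtain ⟨a, b⟩ := t
    cases b with
    | true =>
      rw [pp_open, pp_open, ih (a::o) c, ih [a] []]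
      obtain ⟨O, C⟩ := pairProcess ts [] []
      match C with
      | [] => simp
      | y :: C' =>
        simp only [Prod.mk.injEq, List.length_cons, List.drop_succ_cons,
          List.append_nil]
        have hlen : (List.take (C'.length + 1 - (([] : List α).length + 1)) (y :: C')).length
            = C'.length := by simp
        constructor
        · rw [hlen]; simp
        · rw [hlen, List.take_take]
          congr 2
          all_goals first | omega | simp | rfl
    | false =>
      match o with
      | [] =>
        rw [pp_close_nil, pp_close_nil, ih [] (a::c), ih [] [a]]
        obtain ⟨O, C⟩ := pairProcess ts [] []
        simp only [Prod.mk.injEq, List.drop_nil, List.length_nil, Nat.sub_zero,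
          List.take_length, List.length_append, List.length_cons, List.append_nil,
          List.length_singleton]
        constructor
        · trivial
        · rw [List.take_of_length_le (by simp), List.append_assoc]
          rfl
      | x :: o' =>
        rw [pp_close_cons, pp_close_nil, ih o' c, ih [] [a]]
        obtain ⟨O, C⟩ := pairProcess ts [] []
        simp only [Prod.mk.injEq, List.drop_nil, List.append_nil, List.length_nil,
          Nat.sub_zero, List.take_length, List.length_append, List.length_cons,
          List.length_singleton]
        constructor
        · rw [List.drop_succ_cons]
        · rw [List.take_append_of_le_length (by omega)]
          congr 2
          omega

lemma pp_append (ts1 ts2 : List (α×Bool)) (o c : List α) :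
    pairProcess (ts1 ++ ts2) o c
      = pairProcess ts2 (pairProcess ts1 o c).1 (pairProcess ts1 o c).2 := by
  induction ts1 generalizing o c with
  | nil => rfl
  | cons t ts1 ih =>
    obtain ⟨a, b⟩ := t
    cases b with
    | true => rw [List.cons_append, pp_open, pp_open, ih]
    | false =>
      match o with
      | [] => rw [List.cons_append, pp_close_nil, pp_close_nil, ih]
      | x :: o' => rw [List.cons_append, pp_close_cons, pp_close_cons, ih]



/-- The unmatched-opens list after the cyclic correction. -/
def resUO (ts : List (α × Bool)) : List α :=
  (pairProcess ts [] []).1.drop (pairProcess ts [] []).2.length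

lemma drop_succ_sublist (l : List α) (k : ℕ) : (l.drop (k+1)).Sublist (l.drop k) := by
  rw [← List.drop_drop]
  exact List.drop_sublist 1 _

lemma resUO_insert (ts1 ts2 : List (α × Bool)) (b : α) :
    (resUO (ts1 ++ ts2)).Sublist (resUO (ts1 ++ (b, true) :: ts2)) := by
  have h1 := pp_run ts2 (pairProcess ts1 [] []).1 (pairProcess ts1 [] []).2
  have h2 := pp_run ts2 (b :: (pairProcess ts1 [] []).1) (pairProcess ts1 [] []).2
  unfold resUO
  rw [pp_append, pp_append, pp_open, h1, h2]
  obtain ⟨O1, C1⟩ := pairProcess ts1 [] []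
  obtain ⟨O2, C2⟩ := pairProcess ts2 [] []
  simp only [List.length_append, List.length_take, List.length_cons]
  rcases le_or_gt C2.length O1.length with hle | hlt
  · -- c2 ≤ o1 : both takes are empty-length
    have e1 : C2.length - O1.length = 0 := by omega
    have e2 : C2.length - (O1.length + 1) = 0 := by omega
    rw [e1, e2]
    simp only [List.take_zero, List.length_nil, Nat.zero_min, Nat.min_def]
    -- goal: drop (0 + C1.length) ... sublist drop (0 + C1.length) ...
    have hsub : (O2 ++ List.drop C2.length O1).Sublist
        (O2 ++ List.drop C2.length (b :: O1)) := by
      apply List.Sublist.append_left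
      rcases Nat.eq_zero_or_pos C2.length with h0 | hpos
      · rw [h0]; simp
      · obtain ⟨m, hm⟩ : ∃ m, C2.length = m + 1 := ⟨C2.length - 1, by omega⟩
        rw [hm, List.drop_succ_cons]
        exact drop_succ_sublist O1 m
    simpa using hsub.drop _
  · -- c2 > o1
    have e1 : List.drop C2.length O1 = [] := List.drop_eq_nil_of_le (by omega)
    have e2 : List.drop C2.length (b :: O1) = [] := List.drop_eq_nil_of_le (by simp; omega)
    rw [e1, e2]
    have e3 : min (C2.length - O1.length) C2.length = C2.length - O1.length := by omega
    have e4 : min (C2.length - (O1.length+1)) C2.length = C2.length - (O1.length+1) := by omega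
    rw [e3, e4]
    simp only [List.append_nil]
    have : C2.length - O1.length + C1.length
        = (C2.length - (O1.length + 1) + C1.length) + 1 := by omega
    rw [this]
    exact drop_succ_sublist O2 _

lemma pp_all_false (ts : List (α × Bool)) (h : ∀ t ∈ ts, t.2 = false) (c : List α) :
    pairProcess ts [] c = ([], (ts.map Prod.fst).reverse ++ c) := by
  induction ts generalizing c with
  | nil => simp [pairProcess]
  | cons t ts ih =>
    obtain ⟨a, b⟩ := t
    have hb : b = false := h (a, b) (by simp)
    subst hb
    rw [pp_close_nil, ih (fun t ht => h t (by simp [ht])) (a :: c)]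
    simp

end PPaux

open PPaux

lemma unmatchedOpen_eq_resUO {n : ℕ} (A B : Finset (Fin n)) :
    unmatchedOpen A B = (resUO (parTokens A B)).toFinset := rfl

lemma unmatchedOpen_insert {n : ℕ} (A S : Finset (Fin n)) (b : Fin n) :
    unmatchedOpen A S ⊆ unmatchedOpen A (insert b S) := by
  classical
  by_cases hb : b ∈ S
  · rw [Finset.insert_eq_self.mpr hb]
  set g : Fin n → List (Fin n × Bool) :=
    fun j => (if j ∈ S then [(j, true)] else []) ++ (if j ∈ A then [(j, false)] else [])
    with hg
  set g' : Fin n → List (Fin n × Bool) :=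
    fun j => (if j ∈ insert b S then [(j, true)] else [])
      ++ (if j ∈ A then [(j, false)] else []) with hg'
  obtain ⟨u1, u2, hsplit⟩ := List.append_of_mem (List.mem_finRange b)
  have hnd := List.nodup_finRange n
  rw [hsplit] at hnd
  rw [List.nodup_append] at hnd
  have hb1 : b ∉ u1 := fun hmem => hnd.2.2 b hmem b (by simp) rfl
  have hb2 : b ∉ u2 := by
    have := hnd.2.1
    rw [List.nodup_cons] at this
    exact this.1
  have hcongr1 : u1.flatMap g' = u1.flatMap g := by
    apply List.flatMap_congr
    intro x hx
    have hxb : x ≠ b := fun h => hb1 (h ▸ hx)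
    simp only [hg, hg', Finset.mem_insert, hxb, false_or]
  have hcongr2 : u2.flatMap g' = u2.flatMap g := by
    apply List.flatMap_congr
    intro x hx
    have hxb : x ≠ b := fun h => hb2 (h ▸ hx)
    simp only [hg, hg', Finset.mem_insert, hxb, false_or]
  have hgb : g b = (if b ∈ A then [(b, false)] else []) := by
    simp [hg, hb]
  have hg'b : g' b = (b, true) :: (if b ∈ A then [(b, false)] else []) := by
    simp [hg']
  have hS : parTokens A S
      = u1.flatMap g ++ ((if b ∈ A then [(b, false)] else []) ++ u2.flatMap g) := by
    rw [parTokens, hsplit, List.flatMap_append, List.flatMap_cons]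
    simp only [← hg, if_neg hb, List.nil_append]
  have hS' : parTokens A (insert b S)
      = u1.flatMap g
        ++ (b, true) :: ((if b ∈ A then [(b, false)] else []) ++ u2.flatMap g) := by
    rw [parTokens, hsplit, List.flatMap_append, List.flatMap_cons]
    simp only [← hg', hcongr1, hcongr2, Finset.mem_insert_self, if_true,
      List.singleton_append, List.cons_append, List.nil_append]
  rw [unmatchedOpen_eq_resUO, unmatchedOpen_eq_resUO, hS, hS']
  intro j hj
  rw [List.mem_toFinset] at hj ⊢
  exact (resUO_insert _ _ b).subset hj

lemma unmatchedOpen_mono {n : ℕ} (A : Finset (Fin n)) {S T : Finset (Fin n)}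
    (h : S ⊆ T) : unmatchedOpen A S ⊆ unmatchedOpen A T := by
  classical
  generalize hk : (T \ S).card = k
  induction k generalizing S with
  | zero =>
    have : T \ S = ∅ := Finset.card_eq_zero.mp hk
    have : T ⊆ S := fun x hx => by
      by_contra hxs
      exact absurd (Finset.mem_sdiff.mpr ⟨hx, hxs⟩) (by rw [this]; simp)
    rw [Finset.Subset.antisymm h this]
  | succ k ih =>
    have hne : (T \ S).Nonempty := by
      rw [← Finset.card_pos, hk]; omega
    obtain ⟨b, hb⟩ := hne
    rw [Finset.mem_sdiff] at hb
    have h1 : insert b S ⊆ T := Finset.insert_subset hb.1 h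
    have h2 : (T \ insert b S).card = k := by
      have : T \ insert b S = (T \ S).erase b := by
        ext x; simp [Finset.mem_sdiff, Finset.mem_erase, Finset.mem_insert]; tauto
      rw [this, Finset.card_erase_of_mem (Finset.mem_sdiff.mpr hb), hk]
      omega
    exact (unmatchedOpen_insert A S b).trans (ih h1 h2)

lemma unmatchedOpen_empty {n : ℕ} (A : Finset (Fin n)) :
    unmatchedOpen A (∅ : Finset (Fin n)) = ∅ := by
  classical
  have hff : ∀ t ∈ parTokens A (∅ : Finset (Fin n)), t.2 = false := by
    intro t ht
    rw [parTokens] at ht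
    simp only [List.mem_flatMap, Finset.notMem_empty, if_false, List.nil_append,
      List.mem_ite_nil_right, List.mem_singleton] at ht
    obtain ⟨j, _, _, rfl⟩ := ht
    rfl
  rw [unmatchedOpen_eq_resUO, resUO, pp_all_false _ hff]
  simp

lemma mem_parTokens_empty_map {n : ℕ} (A : Finset (Fin n)) (i : Fin n) :
    i ∈ (parTokens A (∅ : Finset (Fin n))).map Prod.fst ↔ i ∈ A := by
  simp only [parTokens, List.mem_map, List.mem_flatMap, Finset.notMem_empty, if_false,
    List.nil_append, List.mem_ite_nil_right, List.mem_singleton]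
  constructor
  · rintro ⟨t, ⟨a, _, ha, rfl⟩, rfl⟩
    exact ha
  · intro hi
    exact ⟨(i, false), ⟨i, List.mem_finRange i, hi, rfl⟩, rfl⟩

lemma unmatchedClose_empty {n : ℕ} (A : Finset (Fin n)) :
    unmatchedClose A (∅ : Finset (Fin n)) = A := by
  classical
  have hff : ∀ t ∈ parTokens A (∅ : Finset (Fin n)), t.2 = false := by
    intro t ht
    rw [parTokens] at ht
    simp only [List.mem_flatMap, Finset.notMem_empty, if_false, List.nil_append,
      List.mem_ite_nil_right, List.mem_singleton] at ht
    obtain ⟨j, _, _, rfl⟩ := ht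
    rfl
  have hres : parRes A (∅ : Finset (Fin n))
      = ([], ((parTokens A ∅).map Prod.fst).reverse ++ []) := pp_all_false _ hff []
  rw [unmatchedClose, hres]
  simp only [List.append_nil, List.length_nil, Nat.sub_zero]
  rw [List.take_of_length_le (by simp)]
  ext i
  rw [List.mem_toFinset, List.mem_reverse, mem_parTokens_empty_map]

section Levels
variable {n : ℕ} (Q : Finset (Fin n)) (v : Fin n → ℕ)

lemma levelSet_anti {r s : ℕ} (hrs : r ≤ s) : levelSet v s ⊆ levelSet v r := by
  intro j hj
  simp only [levelSet, Finset.mem_filter] at hj ⊢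
  exact ⟨hj.1, le_trans hrs hj.2⟩

lemma levelSet_inc (r : ℕ) (hr : 1 ≤ r) :
    levelSet (incWord v) (r + 1) = levelSet v r := by
  ext j
  simp only [levelSet, incWord, Finset.mem_filter, Finset.mem_univ, true_and]
  by_cases h : v j = 0 <;> simp [h] <;> omega

lemma levelSet_empty {r : ℕ} (hr : (∑ j', v j') < r) : levelSet v r = ∅ := by
  ext j
  simp only [levelSet, Finset.mem_filter, Finset.mem_univ, true_and,
    Finset.notMem_empty, iff_false]
  have : v j ≤ ∑ j', v j' := Finset.single_le_sum (fun i _ => Nat.zero_le _)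
    (Finset.mem_univ j)
  omega

end Levels

section Labels
variable {n : ℕ} (Q : Finset (Fin n)) (v : Fin n → ℕ) (ℓ : ℕ)

lemma labelLevel_inc (r : ℕ) (hr : 1 ≤ r) :
    labelLevel (ℓ + 1) Q (incWord v) (r + 1) = labelLevel ℓ Q v r := by
  rw [labelLevel, labelLevel, levelSet_inc v (r + 1) (by omega), levelSet_inc v r hr]
  congr 1
  by_cases h : r ≤ ℓ
  · rw [if_pos h, if_pos (by omega)]
  · rw [if_neg h, if_neg (by omega)]

lemma labelLevel_empty (r : ℕ) (hr1 : (∑ j', v j') < r) (hr2 : ℓ < r) :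
    labelLevel ℓ Q v r = ∅ := by
  rw [labelLevel, if_neg (by omega), levelSet_empty v hr1,
    levelSet_empty v (by omega), unmatchedOpen_empty, matchedQ, unmatchedClose_empty]
  simp

lemma labelLevel_subset_one (hℓ : 1 ≤ ℓ) (r : ℕ) (hr : 1 ≤ r) :
    labelLevel ℓ Q v r ⊆ labelLevel ℓ Q v 1 := by
  have h1 : labelLevel ℓ Q v 1 = Q ∪ unmatchedOpen Q (levelSet v 2) := by
    rw [labelLevel, if_pos hℓ]
  rw [h1, labelLevel]
  apply Finset.union_subset_union
  · by_cases h : r ≤ ℓ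
    · rw [if_pos h]
    · rw [if_neg h]
      exact Finset.sdiff_subset
  · exact unmatchedOpen_mono Q (levelSet_anti v (by omega))

end Labels

/-- increment compatibility of the fermionic pairing operator: for
`Q ⊆ [n]`, `ℓ ≥ 1` and a word `v` all of whose nonzero entries exceed `ℓ`,
`(Q^{(ℓ)}(v))^{(+1)} = Q^{(ℓ+1)}(v^{(+1)})`. -/
theorem pairing_operator_increment (n : ℕ) (Q : Finset (Fin n)) (v : Fin n → ℕ)
    (ℓ : ℕ) (hℓ : 1 ≤ ℓ) (hv : ∀ j, v j ≠ 0 → ℓ < v j) :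
    incWord (Qop ℓ Q v) = Qop (ℓ + 1) Q (incWord v) := by
  classical
  funext j
  set N := ℓ + 1 + ∑ j', v j' with hN
  set M := ℓ + 1 + 1 + ∑ j', incWord v j' with hM
  have hsumle : (∑ j', v j') ≤ ∑ j', incWord v j' :=
    Finset.sum_le_sum (fun i _ => by simp only [incWord]; split <;> omega)
  have hNM : N + 1 ≤ M := by omega
  set f : ℕ → ℕ := fun r => if j ∈ labelLevel (ℓ + 1) Q (incWord v) r then 1 else 0
    with hf
  set g : ℕ → ℕ := fun r => if j ∈ labelLevel ℓ Q v r then 1 else 0 with hg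
  have hfg : ∀ r, 1 ≤ r → f (r + 1) = g r := by
    intro r hr
    simp only [hf, hg, labelLevel_inc Q v ℓ r hr]
  have hlev12 : levelSet v 2 = levelSet v 1 := by
    ext i
    simp only [levelSet, Finset.mem_filter, Finset.mem_univ, true_and]
    constructor
    · omega
    · intro h
      have := hv i (by omega)
      omega
  have hf1g1 : f 1 = g 1 := by
    have h1 : labelLevel (ℓ + 1) Q (incWord v) 1 = labelLevel ℓ Q v 1 := by
      rw [labelLevel, labelLevel, if_pos (by omega), if_pos hℓ,
        levelSet_inc v 1 le_rfl, hlev12]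
    simp only [hf, hg, h1]
  have hgz : ∀ r, N + 1 ≤ r → g r = 0 := by
    intro r hr
    simp only [hg, labelLevel_empty Q v ℓ r (by omega) (by omega), Finset.notMem_empty,
      if_false]
  -- RHS = f 1 + Qop ℓ Q v j
  have hRHS : Qop (ℓ + 1) Q (incWord v) j = g 1 + Qop ℓ Q v j := by
    have e1 : Qop (ℓ + 1) Q (incWord v) j = ∑ r ∈ Finset.Icc 1 M, f r := rfl
    have e2 : ∑ r ∈ Finset.Icc 1 M, f r = ∑ r ∈ Finset.Icc 1 (N + 1), f r := by
      symm
      apply Finset.sum_subset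
      · intro r hr
        rw [Finset.mem_Icc] at hr ⊢
        omega
      · intro r hr hr'
        rw [Finset.mem_Icc] at hr hr'
        have hr2 : N + 2 ≤ r := by omega
        obtain ⟨m, rfl⟩ : ∃ m, r = m + 1 := ⟨r - 1, by omega⟩
        rw [hfg m (by omega), hgz m (by omega)]
    have e3 : ∑ r ∈ Finset.Icc 1 (N + 1), f r
        = f 1 + ∑ r ∈ Finset.Icc 1 N, f (r + 1) := by
      rw [← Finset.add_sum_erase _ f (Finset.mem_Icc.mpr ⟨le_refl 1, by omega⟩)]
      congr 1
      rw [Finset.Icc_erase_left, ← Finset.Icc_add_one_left_eq_Ioc, ← Finset.map_add_right_Icc 1 N 1,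
        Finset.sum_map]
      rfl
    have e4 : ∑ r ∈ Finset.Icc 1 N, f (r + 1) = ∑ r ∈ Finset.Icc 1 N, g r := by
      apply Finset.sum_congr rfl
      intro r hr
      rw [Finset.mem_Icc] at hr
      exact hfg r hr.1
    rw [e1, e2, e3, e4, hf1g1]
    rfl
  have hQ : Qop ℓ Q v j = ∑ r ∈ Finset.Icc 1 N, g r := rfl
  by_cases hz : Qop ℓ Q v j = 0
  · have hg1 : g 1 = 0 := by
      have h1N : (1 : ℕ) ∈ Finset.Icc 1 N := Finset.mem_Icc.mpr ⟨le_refl 1, by omega⟩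
      have := Finset.single_le_sum (f := g) (fun i _ => Nat.zero_le _) h1N
      rw [← hQ] at this
      omega
    have hL : incWord (Qop ℓ Q v) j = 0 := by simp [incWord, hz]
    rw [hL, hRHS, hg1, hz]
  · have hg1 : g 1 = 1 := by
      obtain ⟨r, hr, hgr⟩ := Finset.exists_ne_zero_of_sum_ne_zero (hQ ▸ hz)
      rw [Finset.mem_Icc] at hr
      have hjr : j ∈ labelLevel ℓ Q v r := by
        by_contra hc
        simp only [hg, hc, if_false] at hgr
        exact hgr rfl
      have : j ∈ labelLevel ℓ Q v 1 := labelLevel_subset_one Q v ℓ hℓ r hr.1 hjr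
      simp only [hg, this, if_pos]
    have hL : incWord (Qop ℓ Q v) j = Qop ℓ Q v j + 1 := by simp [incWord, hz]
    rw [hL, hRHS, hg1]
    omega
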